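/- arXiv:1111.2353 — 2 statements merged into one kernel-verified Lean document; each statement's English description precedes it below -/
import Mathlib

section
/- For every convex body K ⊆ ℝ^n, one has width(K) ≤ (n+1)·inrad(K). -/
open RealInnerProductSpace Pointwise

/-- A convex body in `ℝ^n`: a compact convex set with nonempty interior. -/
def IsConvexBody {m : ℕ} (K : Set (EuclideanSpace ℝ (Fin m))) : Prop :=
  IsCompact K ∧ Convex ℝ K ∧ (interior K).Nonempty

/-- The support function of a set `S ⊆ ℝ^m`. -/
noncomputable def suppFn {m : ℕ} (S : Set (EuclideanSpace ℝ (Fin m)))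
    (u : EuclideanSpace ℝ (Fin m)) : ℝ :=
  sSup ((fun x => ⟪x, u⟫) '' S)

/-- The minimal width of a set `S ⊆ ℝ^m`. -/
noncomputable def minWidth {m : ℕ} (S : Set (EuclideanSpace ℝ (Fin m))) : ℝ :=
  ⨅ u : {u : EuclideanSpace ℝ (Fin m) // ‖u‖ = 1},
    (suppFn S u + suppFn S (-(u : EuclideanSpace ℝ (Fin m))))

/-- The inradius: the supremum of radii of Euclidean balls contained in the set. -/
noncomputable def inrad {m : ℕ} (L : Set (EuclideanSpace ℝ (Fin m))) : ℝ :=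
  sSup {r : ℝ | ∃ c, Metric.closedBall c r ⊆ L}

/-- Steinhagen's inequality: `width(K) ≤ (n+1)·inrad(K)` for a convex body `K ⊆ ℝ^n`. -/
theorem stmt6 {n : ℕ} (K : Set (EuclideanSpace ℝ (Fin n))) (hK : IsConvexBody K) :
    minWidth K ≤ (n + 1 : ℝ) * inrad K := by
  classical
  obtain ⟨hcomp, hconv, hint⟩ := hK
  have hKne : K.Nonempty := hint.mono interior_subset
  rcases Nat.eq_zero_or_pos n with hn0 | hn
  · -- trivial case n = 0
    subst hn0
    have hsub : Subsingleton (EuclideanSpace ℝ (Fin 0)) :=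
      ⟨fun a b => by ext i; exact i.elim0⟩
    have hemp : IsEmpty {u : EuclideanSpace ℝ (Fin 0) // ‖u‖ = 1} := by
      constructor
      rintro ⟨u, hu⟩
      rw [Subsingleton.elim u 0, norm_zero] at hu
      exact one_ne_zero hu.symm
    have hw : minWidth K = 0 := by
      rw [minWidth, iInf_of_isEmpty, Real.sInf_empty]
    have hK_univ : ∀ x, x ∈ K := fun x => by
      obtain ⟨y, hy⟩ := hKne
      rwa [Subsingleton.elim x y]
    have hnb : ¬ BddAbove {r : ℝ | ∃ c, Metric.closedBall c r ⊆ K} := by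
      rintro ⟨M, hM⟩
      have hmem : (M + 1) ∈ {r : ℝ | ∃ c, Metric.closedBall c r ⊆ K} :=
        ⟨0, fun x _ => hK_univ x⟩
      have := hM hmem
      linarith
    rw [hw, inrad, Real.sSup_of_not_bddAbove hnb]
    norm_num
  -- main case
  have hcont : ∀ u : EuclideanSpace ℝ (Fin n),
      Continuous fun x : EuclideanSpace ℝ (Fin n) => ⟪x, u⟫ :=
    fun u => continuous_id.inner continuous_const
  have hbdd : ∀ u : EuclideanSpace ℝ (Fin n), BddAbove ((fun x => ⟪x, u⟫) '' K) :=
    fun u => (hcomp.image (hcont u)).bddAbove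
  have hle_supp : ∀ u : EuclideanSpace ℝ (Fin n), ∀ a ∈ K, ⟪a, u⟫ ≤ suppFn K u :=
    fun u a ha => le_csSup (hbdd u) ⟨a, ha, rfl⟩
  have hsupp_mem : ∀ u : EuclideanSpace ℝ (Fin n), ∃ a ∈ K, ⟪a, u⟫ = suppFn K u := by
    intro u
    obtain ⟨a, ha, h⟩ := (hcomp.image (hcont u)).sSup_mem (hKne.image _)
    exact ⟨a, ha, h⟩
  have hwidth_le : ∀ u : {u : EuclideanSpace ℝ (Fin n) // ‖u‖ = 1},
      minWidth K ≤ suppFn K u + suppFn K (-(u : EuclideanSpace ℝ (Fin n))) := by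
    intro u
    apply ciInf_le
    refine ⟨0, ?_⟩
    rintro x ⟨v, rfl⟩
    obtain ⟨a, ha⟩ := hKne
    have h1 := hle_supp v a ha
    have h2 := hle_supp (-(v : EuclideanSpace ℝ (Fin n))) a ha
    rw [inner_neg_right] at h2
    dsimp only
    linarith
  set s : ℝ := ((n : ℝ) + 1)⁻¹ with hs
  have hnpos : (0:ℝ) < (n : ℝ) + 1 := by positivity
  have hspos : 0 < s := by positivity
  set F : ↥K × ↥K → Set (EuclideanSpace ℝ (Fin n)) :=
    fun p => (fun c => c + s • ((p.1 : EuclideanSpace ℝ (Fin n)) - (p.2 : EuclideanSpace ℝ (Fin n)))) ⁻¹' K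
    with hF
  have hFmem : ∀ p c, c ∈ F p ↔
      c + s • ((p.1 : EuclideanSpace ℝ (Fin n)) - (p.2 : EuclideanSpace ℝ (Fin n))) ∈ K :=
    fun p c => Iff.rfl
  have hFcompact : ∀ p, IsCompact (F p) := by
    intro p
    have : F p = (Homeomorph.addRight
        (s • ((p.1 : EuclideanSpace ℝ (Fin n)) - (p.2 : EuclideanSpace ℝ (Fin n))))) ⁻¹' K := rfl
    rw [this, Homeomorph.isCompact_preimage]
    exact hcomp
  have hFconvex : ∀ p, Convex ℝ (F p) := by
    intro p x hx y hy a b ha hb hab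
    set t := s • ((p.1 : EuclideanSpace ℝ (Fin n)) - (p.2 : EuclideanSpace ℝ (Fin n))) with ht
    have hxK : x + t ∈ K := hx
    have hyK : y + t ∈ K := hy
    have hm := hconv hxK hyK ha hb hab
    have heq : a • (x + t) + b • (y + t) = (a • x + b • y) + (a + b) • t := by
      rw [smul_add, smul_add, add_smul]; abel
    rw [heq, hab, one_smul] at hm
    exact hm
  have h_inter : ∀ I : Finset (↥K × ↥K), I.card ≤ n + 1 → (⋂ p ∈ I, F p).Nonempty := by
    intro I hcard
    obtain ⟨z0, hz0⟩ := hKne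
    set m := I.card with hm
    have hcast : (((n + 1 - m : ℕ)) : ℝ) = (n : ℝ) + 1 - m := by
      rw [Nat.cast_sub hcard]; push_cast; ring
    set c : EuclideanSpace ℝ (Fin n) :=
      s • (∑ q ∈ I, ((q.2 : EuclideanSpace ℝ (Fin n)))) + ((((n + 1 - m : ℕ)) : ℝ) * s) • z0
      with hc
    refine ⟨c, ?_⟩
    rw [Set.mem_iInter₂]
    intro p hpI
    rw [hFmem]
    -- weights and points
    set w : Option (↥K × ↥K) → ℝ :=
      fun o => o.elim ((((n + 1 - m : ℕ)) : ℝ) * s) (fun _ => s) with hwdef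
    set g : Option (↥K × ↥K) → EuclideanSpace ℝ (Fin n) :=
      fun o => o.elim z0 (fun q => if q = p then (p.1 : EuclideanSpace ℝ (Fin n))
        else (q.2 : EuclideanSpace ℝ (Fin n))) with hgdef
    set t : Finset (Option (↥K × ↥K)) := insert none (I.map Function.Embedding.some) with htdef
    have hnone : none ∉ I.map Function.Embedding.some := by simp
    have hw0 : ∀ i ∈ t, 0 ≤ w i := by
      rintro (_ | q) _
      · dsimp [w]
        have : (0:ℝ) ≤ (((n + 1 - m : ℕ)) : ℝ) := Nat.cast_nonneg _
        positivity
      · exact hspos.le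
    have hwsum : ∑ i ∈ t, w i = 1 := by
      rw [htdef, Finset.sum_insert hnone, Finset.sum_map]
      have h1 : ∀ q : ↥K × ↥K, w (Function.Embedding.some q) = s := fun q => rfl
      simp only [h1]
      rw [Finset.sum_const, ← hm]
      show (((n + 1 - m : ℕ)) : ℝ) * s + m • s = 1
      rw [hcast, nsmul_eq_mul, hs]
      have hne : ((n : ℝ) + 1) ≠ 0 := hnpos.ne'
      field_simp
      ring
    have hgK : ∀ i ∈ t, g i ∈ K := by
      rintro (_ | q) _
      · exact hz0
      · dsimp [g]
        split
        · exact (p.1 : ↥K).2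
        · exact (q.2 : ↥K).2
    have hsum_mem : ∑ i ∈ t, w i • g i ∈ K := hconv.sum_mem hw0 hwsum hgK
    have hsplit : ∑ q ∈ I, g (some q)
        = (p.1 : EuclideanSpace ℝ (Fin n)) + ∑ q ∈ I.erase p, ((q.2 : EuclideanSpace ℝ (Fin n))) := by
      rw [← Finset.add_sum_erase _ _ hpI]
      congr 1
      · show g (some p) = _
        simp [hgdef]
      · refine Finset.sum_congr rfl ?_
        intro q hq
        have hqp : q ≠ p := Finset.ne_of_mem_erase hq
        simp [hgdef, hqp]
    have hsplit2 : ∑ q ∈ I, ((q.2 : EuclideanSpace ℝ (Fin n)))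
        = (p.2 : EuclideanSpace ℝ (Fin n)) + ∑ q ∈ I.erase p, ((q.2 : EuclideanSpace ℝ (Fin n))) :=
      (Finset.add_sum_erase _ _ hpI).symm
    have hfinal : ∑ i ∈ t, w i • g i
        = c + s • ((p.1 : EuclideanSpace ℝ (Fin n)) - (p.2 : EuclideanSpace ℝ (Fin n))) := by
      rw [htdef, Finset.sum_insert hnone, Finset.sum_map]
      simp only [Function.Embedding.some_apply]
      have : ∑ q ∈ I, w (some q) • g (some q) = s • ∑ q ∈ I, g (some q) := by
        rw [Finset.smul_sum]
        refine Finset.sum_congr rfl fun q _ => ?_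
        simp [hwdef]
      rw [this, hsplit, hc, hsplit2]
      show (((n + 1 - m : ℕ) : ℝ) * s) • z0 + _ = _
      module
    rw [← hfinal]
    exact hsum_mem
  have hHelly : (⋂ p, F p).Nonempty := by
    apply Convex.helly_theorem_compact' (𝕜 := ℝ) hFconvex hFcompact
    intro I hI
    apply h_inter I
    rwa [finrank_euclideanSpace_fin] at hI
  obtain ⟨c, hc⟩ := hHelly
  have hcK : ∀ x ∈ K, ∀ y ∈ K, c + s • (x - y) ∈ K := by
    intro x hx y hy
    exact Set.mem_iInter.mp hc (⟨x, hx⟩, ⟨y, hy⟩)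
  set R : ℝ := minWidth K * s with hR
  have hball : Metric.closedBall c R ⊆ K := by
    intro z hz
    by_contra hzK
    obtain ⟨f, t0, hft, htf⟩ := geometric_hahn_banach_closed_point hconv hcomp.isClosed hzK
    set v := (InnerProductSpace.toDual ℝ (EuclideanSpace ℝ (Fin n))).symm f with hv
    have hfv : ∀ x : EuclideanSpace ℝ (Fin n), f x = ⟪x, v⟫ := fun x => by
      rw [real_inner_comm]
      exact (InnerProductSpace.toDual_symm_apply).symm
    have hvne : v ≠ 0 := by
      intro h0
      obtain ⟨a, ha⟩ := hKne
      have h1 := hft a ha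
      rw [hfv, h0, inner_zero_right] at h1
      have h2 := htf
      rw [hfv, h0, inner_zero_right] at h2
      linarith
    set u : EuclideanSpace ℝ (Fin n) := ‖v‖⁻¹ • v with hu
    have hun : ‖u‖ = 1 := by
      rw [hu, norm_smul, norm_inv, norm_norm,
        inv_mul_cancel₀ (norm_ne_zero_iff.mpr hvne)]
    have hsep : ∀ a ∈ K, ⟪a, u⟫ < ⟪z, u⟫ := by
      intro a ha
      have h1 : (⟪a, v⟫ : ℝ) < ⟪z, v⟫ := by
        rw [← hfv, ← hfv]; exact lt_trans (hft a ha) htf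
      rw [hu, real_inner_smul_right, real_inner_smul_right]
      have hpos : (0:ℝ) < ‖v‖⁻¹ := by
        have := norm_pos_iff.mpr hvne
        positivity
      exact (mul_lt_mul_iff_right₀ hpos).mpr h1
    obtain ⟨x, hx, hxs⟩ := hsupp_mem u
    obtain ⟨y, hy, hys⟩ := hsupp_mem (-u)
    have hmem := hcK x hx y hy
    have h1 : minWidth K ≤ suppFn K u + suppFn K (-u) := hwidth_le ⟨u, hun⟩
    have h2 : ⟪c + s • (x - y), u⟫ < ⟪z, u⟫ := hsep _ hmem
    have e1 : (⟪c + s • (x - y), u⟫ : ℝ) = ⟪c, u⟫ + s * (⟪x, u⟫ - ⟪y, u⟫) := by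
      rw [inner_add_left, real_inner_smul_left, inner_sub_left]
    have e2 : (⟪y, u⟫ : ℝ) = - suppFn K (-u) := by
      rw [inner_neg_right] at hys; linarith
    have e3 : (⟪z, u⟫ : ℝ) ≤ ⟪c, u⟫ + R := by
      have h4 : (⟪z - c, u⟫ : ℝ) ≤ ‖z - c‖ * ‖u‖ := real_inner_le_norm _ _
      rw [hun, mul_one] at h4
      have h5 : ‖z - c‖ ≤ R := by
        rw [Metric.mem_closedBall, dist_eq_norm] at hz; exact hz
      have h6 : (⟪z, u⟫ : ℝ) = ⟪c, u⟫ + ⟪z - c, u⟫ := by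
        rw [inner_sub_left]; ring
      linarith
    have h7 : s * minWidth K ≤ s * (suppFn K u + suppFn K (-u)) :=
      mul_le_mul_of_nonneg_left h1 hspos.le
    rw [e1, hxs, e2] at h2
    rw [hR] at e3
    nlinarith [h2, e3, h7]
  have hRmem : R ∈ {r : ℝ | ∃ c, Metric.closedBall c r ⊆ K} := ⟨c, hball⟩
  obtain ⟨M, hM⟩ := hcomp.isBounded.subset_closedBall 0
  have hbdd' : BddAbove {r : ℝ | ∃ c, Metric.closedBall c r ⊆ K} := by
    refine ⟨2 * max M 0, ?_⟩
    rintro r ⟨c', hc'⟩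
    rcases le_or_gt r 0 with h | h
    · have : (0:ℝ) ≤ 2 * max M 0 := by positivity
      linarith
    · set e : EuclideanSpace ℝ (Fin n) := EuclideanSpace.single (⟨0, hn⟩ : Fin n) (1:ℝ) with he
      have hen : ‖e‖ = 1 := by
        rw [he, EuclideanSpace.norm_single]; norm_num
      have h1 : c' ∈ K := hc' (Metric.mem_closedBall_self h.le)
      have h2 : c' + r • e ∈ K := by
        apply hc'
        rw [Metric.mem_closedBall, dist_eq_norm, add_sub_cancel_left, norm_smul, hen,
          mul_one, Real.norm_eq_abs, abs_of_pos h]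
      have h3 : ‖c'‖ ≤ M := by
        have := hM h1
        rwa [Metric.mem_closedBall, dist_zero_right] at this
      have h4 : ‖c' + r • e‖ ≤ M := by
        have := hM h2
        rwa [Metric.mem_closedBall, dist_zero_right] at this
      have h5 : ‖r • e‖ = r := by
        rw [norm_smul, hen, mul_one, Real.norm_eq_abs, abs_of_pos h]
      have h6 : r ≤ ‖c' + r • e‖ + ‖c'‖ := by
        have hns := norm_sub_le (c' + r • e) c'
        rwa [add_sub_cancel_left, h5] at hns
      have h7 : M ≤ max M 0 := le_max_left _ _
      linarith
  have hfin : R ≤ inrad K := le_csSup hbdd' hRmem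
  have heq : minWidth K = ((n : ℝ) + 1) * R := by
    rw [hR, hs]
    field_simp
  rw [heq]
  exact mul_le_mul_of_nonneg_left hfin hnpos.le
end

section
/- For a convex body K ⊆ ℝ^n, the inradius of the Minkowski symmetral K* = (1/2)(K − K) satisfies inrad(K*) ≤ ((n+1)/2)·inrad(K). -/
open RealInnerProductSpace Pointwise

section Aux

open Metric Set

lemma le_suppFn {m : ℕ} {K : Set (EuclideanSpace ℝ (Fin m))} (hK : IsCompact K)
    {x u : EuclideanSpace ℝ (Fin m)} (hx : x ∈ K) : ⟪x, u⟫ ≤ suppFn K u := by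
  apply le_csSup _ (Set.mem_image_of_mem _ hx)
  exact (hK.image (continuous_id.inner continuous_const)).bddAbove

lemma suppFn_le {m : ℕ} {K : Set (EuclideanSpace ℝ (Fin m))} (hne : K.Nonempty)
    {u : EuclideanSpace ℝ (Fin m)} {a : ℝ} (h : ∀ x ∈ K, ⟪x, u⟫ ≤ a) : suppFn K u ≤ a :=
  csSup_le (hne.image _) (by rintro _ ⟨x, hx, rfl⟩; exact h x hx)

lemma ball_subset_of_suppFn {m : ℕ} {K : Set (EuclideanSpace ℝ (Fin m))}
    (hKc : IsCompact K) (hKconv : Convex ℝ K) (hne : K.Nonempty)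
    {c : EuclideanSpace ℝ (Fin m)} {s : ℝ}
    (h : ∀ u, ‖u‖ = 1 → ⟪c, u⟫ + s ≤ suppFn K u) : closedBall c s ⊆ K := by
  intro x hx
  by_contra hxK
  obtain ⟨f, u₀, hfa, hfx⟩ := geometric_hahn_banach_closed_point hKconv hKc.isClosed hxK
  set v := (InnerProductSpace.toDual ℝ _).symm f with hv
  have hfv : ∀ y, f y = ⟪y, v⟫ := fun y => by
    rw [real_inner_comm, hv, InnerProductSpace.toDual_symm_apply]
  have hvne : v ≠ 0 := by
    rintro h0
    obtain ⟨y, hy⟩ := hne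
    have h1 := hfa y hy
    have h2 : f y = 0 := by rw [hfv, h0, inner_zero_right]
    have h3 : f x = 0 := by rw [hfv, h0, inner_zero_right]
    linarith
  set u : EuclideanSpace ℝ (Fin m) := ‖v‖⁻¹ • v with hu
  have hvn : (0:ℝ) < ‖v‖ := norm_pos_iff.2 hvne
  have hun : ‖u‖ = 1 := by
    rw [hu, norm_smul, norm_inv, norm_norm, inv_mul_cancel₀ hvn.ne']
  have hsupp : suppFn K u ≤ ‖v‖⁻¹ * u₀ := by
    apply suppFn_le hne
    intro y hy
    have := hfa y hy
    rw [hfv] at this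
    rw [hu, real_inner_smul_right]
    have : ⟪y, v⟫ ≤ u₀ := this.le
    have h4 : (0:ℝ) < ‖v‖⁻¹ := inv_pos.2 hvn
    nlinarith
  have hxu : ⟪x, u⟫ ≤ ⟪c, u⟫ + s := by
    have h5 : ⟪x - c, u⟫ ≤ ‖x - c‖ * ‖u‖ := real_inner_le_norm _ _
    have h6 : ‖x - c‖ ≤ s := by rwa [← dist_eq_norm, ← mem_closedBall]
    have h7 : ⟪x - c, u⟫ = ⟪x, u⟫ - ⟪c, u⟫ := by rw [inner_sub_left]
    rw [hun] at h5
    linarith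
  have hxu2 : ‖v‖⁻¹ * u₀ < ⟪x, u⟫ := by
    rw [hu, real_inner_smul_right]
    have := hfx
    rw [hfv] at this
    have h4 : (0:ℝ) < ‖v‖⁻¹ := inv_pos.2 hvn
    nlinarith
  have := h u hun
  linarith

lemma contact_normals {m : ℕ} {K : Set (EuclideanSpace ℝ (Fin m))}
    (hKc : IsCompact K) (hKconv : Convex ℝ K) (hne : K.Nonempty)
    (hcne : Kᶜ.Nonempty) {c₀ : EuclideanSpace ℝ (Fin m)} {r : ℝ}
    (hball : closedBall c₀ r ⊆ K) (hr : 0 < r)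
    (hmax : ∀ c ∈ K, infDist c Kᶜ ≤ r) {ε : ℝ} (hε : 0 < ε) :
    (0 : EuclideanSpace ℝ (Fin m)) ∈
      closure (convexHull ℝ {u | ‖u‖ = 1 ∧ suppFn K u ≤ ⟪c₀, u⟫ + r + ε}) := by
  set N := {u : EuclideanSpace ℝ (Fin m) | ‖u‖ = 1 ∧ suppFn K u ≤ ⟪c₀, u⟫ + r + ε} with hN
  by_contra h0
  -- support lower bound in every unit direction
  have hru : ∀ u : EuclideanSpace ℝ (Fin m), ‖u‖ = 1 → ⟪c₀, u⟫ + r ≤ suppFn K u := by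
    intro u hu
    have hmem : c₀ + r • u ∈ K := by
      apply hball
      simp [mem_closedBall, dist_eq_norm, norm_smul, hu, abs_of_pos hr, hr.le]
    have := le_suppFn hKc (u := u) hmem
    rwa [inner_add_left, real_inner_smul_left, real_inner_self_eq_norm_sq, hu,
      one_pow, mul_one] at this
  -- separation
  obtain ⟨f, u₀, hf0, hfb⟩ := geometric_hahn_banach_point_closed
    ((convex_convexHull ℝ N).closure) isClosed_closure h0
  have hf00 : f 0 = 0 := map_zero f
  have hu₀ : 0 < u₀ := by linarith [hf0]
  set v := (InnerProductSpace.toDual ℝ _).symm f with hv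
  have hfv : ∀ y, f y = ⟪y, v⟫ := fun y => by
    rw [real_inner_comm, hv, InnerProductSpace.toDual_symm_apply]
  have hNv : ∀ u ∈ N, u₀ < ⟪u, v⟫ := by
    intro u hu
    have := hfb u (subset_closure (subset_convexHull ℝ N hu))
    rwa [hfv] at this
  -- perturbed ball
  set t : ℝ := ε / (2 * (‖v‖ + 1)) with ht
  have hvpos : (0:ℝ) < ‖v‖ + 1 := by positivity
  have htpos : 0 < t := by positivity
  have htv : t * ‖v‖ ≤ ε / 2 := by
    rw [ht, div_mul_eq_mul_div, div_le_div_iff₀ (by positivity) (by norm_num)]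
    nlinarith [norm_nonneg v]
  set d : ℝ := min (t * u₀) (ε / 2) with hd
  have hd1 : d ≤ t * u₀ := min_le_left _ _
  have hd2 : d ≤ ε / 2 := min_le_right _ _
  have hdpos : 0 < d := lt_min (by positivity) (by positivity)
  set r' : ℝ := r + d with hr'
  have hrr' : r < r' := by linarith
  set c' := c₀ + t • (-v) with hc'
  have hsub : closedBall c' r' ⊆ K := by
    apply ball_subset_of_suppFn hKc hKconv hne
    intro u hu
    have hinner : ⟪c', u⟫ = ⟪c₀, u⟫ - t * ⟪u, v⟫ := by
      rw [hc', inner_add_left, real_inner_smul_left, inner_neg_left, real_inner_comm v u]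
      ring
    by_cases huN : u ∈ N
    · have h1 := hNv u huN
      have h2 := hru u hu
      have h3 : t * u₀ ≤ t * ⟪u, v⟫ := by nlinarith
      rw [hinner]
      linarith
    · have h1 : ⟪c₀, u⟫ + r + ε < suppFn K u := by
        have := huN
        rw [hN, Set.mem_setOf_eq] at this
        push_neg at this
        exact this hu
      have h2 : ⟪u, v⟫ ≥ -‖v‖ := by
        have := real_inner_le_norm u (-v)
        rw [inner_neg_right, norm_neg, hu, one_mul] at this
        linarith
      have h3 : t * (-‖v‖) ≤ t * ⟪u, v⟫ := by nlinarith
      rw [hinner]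
      nlinarith
  have hc'K : c' ∈ K := hsub (by simp [mem_closedBall]; linarith [hrr', hr])
  have hinf : r' ≤ infDist c' Kᶜ := by
    by_contra hlt
    push_neg at hlt
    obtain ⟨y, hy, hdy⟩ := (infDist_lt_iff hcne).1 hlt
    exact hy (hsub (by simpa [mem_closedBall, dist_comm] using hdy.le))
  have := hmax c' hc'K
  linarith

lemma exists_good_direction {m : ℕ} {K : Set (EuclideanSpace ℝ (Fin m))}
    (hKc : IsCompact K) (hne : K.Nonempty) {R : ℝ} (hR : ∀ x ∈ K, ‖x‖ ≤ R)
    {c₀ : EuclideanSpace ℝ (Fin m)} (hc₀ : c₀ ∈ K) {r ε : ℝ} (hε : 0 < ε) (hr : 0 ≤ r)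
    (hcl : (0 : EuclideanSpace ℝ (Fin m)) ∈
      closure (convexHull ℝ {u | ‖u‖ = 1 ∧ suppFn K u ≤ ⟪c₀, u⟫ + r + ε})) :
    ∃ u : EuclideanSpace ℝ (Fin m), ‖u‖ = 1 ∧ suppFn K u ≤ ⟪c₀, u⟫ + r + ε ∧
      suppFn K (-u) ≤ ⟪c₀, -u⟫ + m * (r + ε) + (m + 1) * (2 * R) * ε := by
  have hR0 : 0 ≤ R := le_trans (norm_nonneg _) (hR _ hc₀)
  set N := {u : EuclideanSpace ℝ (Fin m) | ‖u‖ = 1 ∧ suppFn K u ≤ ⟪c₀, u⟫ + r + ε} with hN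
  -- a point of the convex hull near 0
  obtain ⟨p, hp, hpd⟩ := Metric.mem_closure_iff.1 hcl ε hε
  have hpn : ‖p‖ ≤ ε := by
    have : dist (0 : EuclideanSpace ℝ (Fin m)) p = ‖p‖ := by
      rw [dist_eq_norm, zero_sub, norm_neg]
    linarith [hpd, this.symm.le]
  -- Caratheodory
  obtain ⟨ι, hfin, z, w, hzN, haff, hw0, hw1, hwz⟩ := eq_pos_convex_span_of_mem_convexHull hp
  letI := hfin
  letI : DecidableEq ι := Classical.decEq ι
  haveI : Nonempty ι := by
    by_contra h
    rw [not_nonempty_iff] at h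
    rw [Finset.univ_eq_empty, Finset.sum_empty] at hw1
    norm_num at hw1
  have hcard : Fintype.card ι ≤ m + 1 := by
    have h1 := haff.finrank_vectorSpan_add_one
    have h2 : Module.finrank ℝ (vectorSpan ℝ (Set.range z)) ≤
        Module.finrank ℝ (EuclideanSpace ℝ (Fin m)) := Submodule.finrank_le _
    rw [finrank_euclideanSpace_fin] at h2
    omega
  -- the coordinate with maximal weight
  obtain ⟨j, -, hjmax⟩ := Finset.exists_max_image Finset.univ w Finset.univ_nonempty
  have hwj0 : 0 < w j := hw0 j
  have hwj1 : w j ≤ 1 := by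
    have h := Finset.single_le_sum (f := w) (fun i _ => (hw0 i).le) (Finset.mem_univ j)
    rw [hw1] at h
    exact h
  have hwjc : 1 ≤ ((m : ℝ) + 1) * w j := by
    have h1 : ∑ i, w i ≤ Finset.univ.card • w j :=
      Finset.sum_le_card_nsmul _ _ _ (fun i _ => hjmax i (Finset.mem_univ i))
    rw [Finset.card_univ, nsmul_eq_mul] at h1
    have h2 : (Fintype.card ι : ℝ) ≤ (m : ℝ) + 1 := by exact_mod_cast hcard
    nlinarith
  have hzj : z j ∈ N := hzN ⟨j, rfl⟩
  refine ⟨z j, hzj.1, hzj.2, ?_⟩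
  apply suppFn_le hne
  intro x hx
  -- sum identities
  have hip : ∀ y : EuclideanSpace ℝ (Fin m), ∑ i, w i * ⟪y, z i⟫ = ⟪y, p⟫ := by
    intro y
    rw [← hwz, inner_sum]
    exact Finset.sum_congr rfl (fun i _ => (real_inner_smul_right y (z i) (w i)).symm)
  have hS1 : ∑ i ∈ Finset.univ.erase j, w i = 1 - w j := by
    have := Finset.sum_erase_add Finset.univ w (Finset.mem_univ j)
    linarith
  have hS2 : ∑ i ∈ Finset.univ.erase j, w i * ⟪c₀, z i⟫ = ⟪c₀, p⟫ - w j * ⟪c₀, z j⟫ := by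
    have := Finset.sum_erase_add Finset.univ (fun i => w i * ⟪c₀, z i⟫) (Finset.mem_univ j)
    have h2 := hip c₀
    linarith
  have hS3 : ∑ i ∈ Finset.univ.erase j, w i * ⟪x, z i⟫ = ⟪x, p⟫ - w j * ⟪x, z j⟫ := by
    have := Finset.sum_erase_add Finset.univ (fun i => w i * ⟪x, z i⟫) (Finset.mem_univ j)
    have h2 := hip x
    linarith
  have hS4 : ∑ i ∈ Finset.univ.erase j, w i * ⟪x, z i⟫ ≤
      ∑ i ∈ Finset.univ.erase j, w i * (⟪c₀, z i⟫ + (r + ε)) := by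
    apply Finset.sum_le_sum
    intro i _
    have hzi : z i ∈ N := hzN ⟨i, rfl⟩
    have h1 : ⟪x, z i⟫ ≤ ⟪c₀, z i⟫ + (r + ε) := by
      have := le_suppFn hKc (u := z i) hx
      have h2 := hzi.2
      linarith
    exact mul_le_mul_of_nonneg_left h1 (hw0 i).le
  have hS5 : ∑ i ∈ Finset.univ.erase j, w i * (⟪c₀, z i⟫ + (r + ε)) =
      (⟪c₀, p⟫ - w j * ⟪c₀, z j⟫) + (1 - w j) * (r + ε) := by
    simp only [mul_add, Finset.sum_add_distrib, ← Finset.sum_mul, hS1, hS2]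
  have hB : ⟪c₀, p⟫ - ⟪x, p⟫ ≤ 2 * R * ε := by
    have h1 : ⟪c₀, p⟫ ≤ ‖c₀‖ * ‖p‖ := real_inner_le_norm _ _
    have h2 := real_inner_le_norm x (-p)
    rw [inner_neg_right, norm_neg] at h2
    have h3 : ‖c₀‖ * ‖p‖ ≤ R * ε := mul_le_mul (hR c₀ hc₀) hpn (norm_nonneg p) hR0
    have h4 : ‖x‖ * ‖p‖ ≤ R * ε := mul_le_mul (hR x hx) hpn (norm_nonneg p) hR0
    linarith
  have key : w j * ⟪c₀, z j⟫ - w j * ⟪x, z j⟫ ≤ 2 * R * ε + (1 - w j) * (r + ε) := by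
    linarith [hS4.trans_eq hS5, hS3]
  have hre : (0:ℝ) ≤ r + ε := by linarith
  have hRe : (0:ℝ) ≤ 2 * R * ε := by positivity
  rw [inner_neg_right, inner_neg_right]
  nlinarith [key, hwjc, hwj0, hwj1, hre, hRe, hε, mul_pos hwj0 hε,
    mul_nonneg hwj0.le hre, mul_nonneg hwj0.le hRe]

end Aux

open Metric Set in
/-- The inradius of the Minkowski symmetral `K* = (1/2)(K − K)` is at most `((n+1)/2)·inrad(K)`. -/
theorem stmt7 {n : ℕ} (K : Set (EuclideanSpace ℝ (Fin n))) (hK : IsConvexBody K) :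
    inrad ((1 / 2 : ℝ) • (K + -K)) ≤ ((n + 1 : ℝ) / 2) * inrad K := by
  obtain ⟨hKc, hKconv, hKint⟩ := hK
  have hne : K.Nonempty := hKint.mono interior_subset
  set L : Set (EuclideanSpace ℝ (Fin n)) := (1 / 2 : ℝ) • (K + -K) with hL
  -- the trivial zero-dimensional case
  rcases Nat.eq_zero_or_pos n with hn | hn
  · subst hn
    haveI : Subsingleton (EuclideanSpace ℝ (Fin 0)) :=
      ⟨fun a b => by ext i; exact Fin.elim0 i⟩
    have hzero : ∀ M : Set (EuclideanSpace ℝ (Fin 0)), M.Nonempty → inrad M = 0 := by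
      intro M hM
      obtain ⟨x₀, hx₀⟩ := hM
      have : {r : ℝ | ∃ c, closedBall c r ⊆ M} = univ := by
        apply eq_univ_of_forall
        intro ρ
        rcases lt_or_ge ρ 0 with h | h
        · exact ⟨x₀, by simp [Metric.closedBall_eq_empty.2 h]⟩
        · exact ⟨x₀, fun y _ => (Subsingleton.elim y x₀) ▸ hx₀⟩
      rw [inrad, this, Real.sSup_univ]
    obtain ⟨x₀, hx₀⟩ := id hne
    have hLne : L.Nonempty :=
      ⟨(1/2 : ℝ) • (x₀ + -x₀), Set.smul_mem_smul_set (Set.add_mem_add hx₀ (Set.neg_mem_neg.2 hx₀))⟩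
    rw [hzero K hne, hzero L hLne]
    norm_num
  -- now n ≥ 1
  -- a bound for K
  obtain ⟨R, hR0, hR⟩ := hKc.isBounded.exists_pos_norm_le
  -- a unit vector
  set e : EuclideanSpace ℝ (Fin n) := EuclideanSpace.single ⟨0, hn⟩ (1:ℝ) with he
  have hen : ‖e‖ = 1 := by simp [he]
  -- the complement is nonempty
  have hcne : Kᶜ.Nonempty := by
    refine ⟨(R + 1) • e, fun hmem => ?_⟩
    have := hR _ hmem
    rw [norm_smul, hen, mul_one, Real.norm_eq_abs, abs_of_pos (by linarith)] at this
    linarith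
  -- maximize the distance to the complement
  obtain ⟨c₀, hc₀K, hc₀max⟩ := hKc.exists_isMaxOn hne
    (Metric.continuous_infDist_pt Kᶜ).continuousOn
  set r : ℝ := infDist c₀ Kᶜ with hrdef
  have hmax : ∀ c ∈ K, infDist c Kᶜ ≤ r := fun c hc => hc₀max hc
  -- the inradius is positive
  have hr : 0 < r := by
    obtain ⟨z, hz⟩ := hKint
    obtain ⟨ε', hε', hball'⟩ := Metric.mem_nhds_iff.1 (mem_interior_iff_mem_nhds.1 hz)
    have hzK : z ∈ K := interior_subset hz
    have h1 : ε' ≤ infDist z Kᶜ := by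
      by_contra h
      push_neg at h
      obtain ⟨y, hy, hdy⟩ := (infDist_lt_iff hcne).1 h
      exact hy (hball' (by rwa [mem_ball, dist_comm]))
    have := hmax z hzK
    linarith
  -- the maximal ball is contained in K
  have hball : closedBall c₀ r ⊆ K := by
    intro x hx
    by_contra hxK
    have hxc : x ∈ Kᶜ := hxK
    have hdle : dist c₀ x ≤ r := by rwa [mem_closedBall, dist_comm] at hx
    have hdge : r ≤ dist c₀ x := infDist_le_dist_of_mem hxc
    have hdeq : dist c₀ x = r := le_antisymm hdle hdge
    obtain ⟨s, hs, hballs⟩ := Metric.isOpen_iff.1 hKc.isClosed.isOpen_compl x hxc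
    set μ : ℝ := min (s / (2 * r)) (1 / 2) with hμ
    have hμ0 : 0 < μ := lt_min (by positivity) (by norm_num)
    have hμ1 : μ ≤ 1 / 2 := min_le_right _ _
    have hμs : μ * r < s := by
      have h1 : μ ≤ s / (2 * r) := min_le_left _ _
      have h2 : s / (2 * r) * r = s / 2 := by field_simp
      have h3 := mul_le_mul_of_nonneg_right h1 hr.le
      rw [h2] at h3
      linarith
    set x' : EuclideanSpace ℝ (Fin n) := x + μ • (c₀ - x) with hx'
    have hx'K : x' ∈ Kᶜ := by
      apply hballs
      rw [mem_ball, hx', dist_eq_norm]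
      simp only [add_sub_cancel_left]
      rw [norm_smul, Real.norm_eq_abs, abs_of_pos hμ0]
      have : ‖c₀ - x‖ = r := by rw [← hdeq, dist_eq_norm]
      rw [this]
      exact hμs
    have hdist : dist c₀ x' = (1 - μ) * r := by
      have hnorm : ‖c₀ - x‖ = r := by rw [← hdeq, dist_eq_norm]
      rw [hx', dist_eq_norm]
      have heq : c₀ - (x + μ • (c₀ - x)) = (1 - μ) • (c₀ - x) := by
        rw [sub_smul, one_smul]
        abel
      rw [heq, norm_smul, Real.norm_eq_abs, abs_of_pos (by linarith : (0:ℝ) < 1 - μ), hnorm]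
    have := infDist_le_dist_of_mem (x := c₀) hx'K
    rw [hdist] at this
    nlinarith
  -- boundedness of the inradius set for K
  have hbddK : BddAbove {ρ : ℝ | ∃ c, closedBall c ρ ⊆ K} := by
    refine ⟨2 * R, ?_⟩
    rintro ρ ⟨c, hc⟩
    rcases le_or_gt ρ 0 with h | h
    · linarith
    · have hcK : c ∈ K := hc (by simp [mem_closedBall, h.le])
      have hc2 : c + ρ • e ∈ K := by
        apply hc
        simp [mem_closedBall, dist_eq_norm, norm_smul, hen, abs_of_pos h, h.le]
      have h1 := hR _ hcK
      have h2 := hR _ hc2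
      have : ρ = ‖(c + ρ • e) - c‖ := by
        simp [norm_smul, hen, abs_of_pos h]
      calc ρ = ‖(c + ρ • e) - c‖ := this
        _ ≤ ‖c + ρ • e‖ + ‖c‖ := norm_sub_le _ _
        _ ≤ 2 * R := by linarith
  have hrle : r ≤ inrad K := le_csSup hbddK ⟨c₀, hball⟩
  have hinradK0 : 0 ≤ inrad K := le_trans hr.le hrle
  -- now the main bound
  apply Real.sSup_le _ (by positivity)
  rintro ρ ⟨c, hsub⟩
  rcases lt_or_ge ρ 0 with hρ | hρ
  · have : 0 ≤ ((n : ℝ) + 1) / 2 * inrad K := mul_nonneg (by positivity) hinradK0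
    linarith
  -- key: ρ ≤ (n+1)/2 * r
  have hkey : ρ ≤ ((n + 1 : ℝ) / 2) * r := by
    apply le_of_forall_pos_le_add
    intro δ hδ
    set C : ℝ := (n + 1) * (1 + 2 * R) with hC
    have hCpos : 0 < C := by positivity
    set ε : ℝ := δ / C with hε'
    have hε : 0 < ε := by positivity
    obtain ⟨u, hu, hSp, hSm⟩ := exists_good_direction hKc hne (fun x hx => hR x hx) hc₀K hε hr.le
      (contact_normals hKc hKconv hne hcne hball hr hmax hε)
    -- the two points of the ball
    have m1 : c + ρ • u ∈ L := hsub (by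
      simp [mem_closedBall, dist_eq_norm, norm_smul, hu, abs_of_nonneg hρ])
    have m2 : c - ρ • u ∈ L := hsub (by
      simp [mem_closedBall, dist_eq_norm, norm_smul, hu, abs_of_nonneg hρ])
    -- unpack memberships
    obtain ⟨q₁, hq₁, hq₁e⟩ := m1
    obtain ⟨a₁, ha₁, b₁, hb₁, hab₁⟩ := Set.mem_add.1 hq₁
    rw [Set.mem_neg] at hb₁
    obtain ⟨q₂, hq₂, hq₂e⟩ := m2
    obtain ⟨a₂, ha₂, b₂, hb₂, hab₂⟩ := Set.mem_add.1 hq₂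
    rw [Set.mem_neg] at hb₂
    -- take inner products with u
    have huu : ⟪u, u⟫ = (1:ℝ) := by
      rw [real_inner_self_eq_norm_sq, hu]; norm_num
    have e1 : (1/2 : ℝ) * (⟪a₁, u⟫ + ⟪b₁, u⟫) = ⟪c, u⟫ + ρ := by
      have := congrArg (fun y : EuclideanSpace ℝ (Fin n) => ⟪y, u⟫) hq₁e
      simp only [← hab₁, inner_add_left, real_inner_smul_left, huu, mul_one] at this
      linarith
    have e2 : (1/2 : ℝ) * (⟪a₂, u⟫ + ⟪b₂, u⟫) = ⟪c, u⟫ - ρ := by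
      have := congrArg (fun y : EuclideanSpace ℝ (Fin n) => ⟪y, u⟫) hq₂e
      simp only [← hab₂, inner_add_left, inner_sub_left, real_inner_smul_left, huu,
        mul_one] at this
      linarith
    -- bounds
    have hcu : ⟪c₀, -u⟫ = -⟪c₀, u⟫ := by rw [inner_neg_right]
    have ba1 : ⟪a₁, u⟫ ≤ ⟪c₀, u⟫ + r + ε := le_trans (le_suppFn hKc ha₁) hSp
    have bb2 : ⟪-b₂, u⟫ ≤ ⟪c₀, u⟫ + r + ε := le_trans (le_suppFn hKc hb₂) hSp
    have bb1 : ⟪-b₁, -u⟫ ≤ ⟪c₀, -u⟫ + n * (r + ε) + (n + 1) * (2 * R) * ε :=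
      le_trans (le_suppFn hKc hb₁) hSm
    have ba2 : ⟪a₂, -u⟫ ≤ ⟪c₀, -u⟫ + n * (r + ε) + (n + 1) * (2 * R) * ε :=
      le_trans (le_suppFn hKc ha₂) hSm
    rw [inner_neg_neg] at bb1
    rw [inner_neg_right] at ba2
    rw [inner_neg_left] at bb2
    rw [hcu] at bb1 ba2
    -- conclude
    have h4ρ : 4 * ρ ≤ 2 * (r + ε) + 2 * ((n:ℝ) * (r + ε) + (n + 1) * (2 * R) * ε) := by
      linarith
    have hCε : ε * C = δ := by
      rw [hε', div_mul_cancel₀ _ hCpos.ne']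
    have hexp : 2 * (r + ε) + 2 * ((n:ℝ) * (r + ε) + (n + 1) * (2 * R) * ε)
        = 2 * ((n:ℝ) + 1) * r + 2 * (ε * C) := by
      rw [hC]; ring
    rw [hexp, hCε] at h4ρ
    linarith
  calc ρ ≤ ((n + 1 : ℝ) / 2) * r := hkey
    _ ≤ ((n + 1 : ℝ) / 2) * inrad K := by
      apply mul_le_mul_of_nonneg_left hrle (by positivity)
end
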